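/- For every optimal conditional machine U there exists a constant c ∈ ℕ such that for every string x there is a string p with U(p, Λ) = x, |p| = C(x), and C(p|x) ≤ c · log C(x). -/

import Mathlib

/-- A string is a finite binary string. -/
abbrev Str : Type := List Bool

/-- A conditional machine: a partial computable function mapping a pair of
strings `(p, y)` to a string. -/
abbrev CondMachine : Type := {V : Str × Str →. Str // Partrec V}

/-- `condC V x y` is `C_V(x|y)`: the least length of a program `p` with
`V (p, y) = x`, as an element of `ℕ∞` (it is `⊤` if no such `p` exists). -/
noncomputable def condC (V : CondMachine) (x y : Str) : ℕ∞ :=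
  sInf {n : ℕ∞ | ∃ p : Str, x ∈ V.1 (p, y) ∧ (p.length : ℕ∞) = n}

/-- A conditional machine `U` is optimal if for every conditional machine `V`
there is a constant `d` with `C_U(x|y) ≤ C_V(x|y) + d` for all `x, y`. -/
def OptimalMachine (U : CondMachine) : Prop :=
  ∀ V : CondMachine, ∃ d : ℕ, ∀ x y : Str, condC U x y ≤ condC V x y + (d : ℕ∞)

/-- For an optimal machine all complexities are finite natural numbers. -/
noncomputable def KC (U : CondMachine) (x y : Str) : ℕ := (condC U x y).toNat

/-- `log2 n = Nat.log 2 (n + 2)`, so `log2 n ≥ 1`. -/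
def log2 (n : ℕ) : ℕ := Nat.log 2 (n + 2)

namespace ShortestAux

open Encodable Nat.Partrec Nat.Partrec.Code

/-- Decode a binary string (little-endian) to a natural number. -/
def natOfStr (q : Str) : ℕ := q.foldr (fun b m => 2 * m + cond b 1 0) 0

lemma natOfStr_bits (n : ℕ) : natOfStr (Nat.bits n) = n := by
  induction n using Nat.binaryRec' with
  | zero => simp [natOfStr]
  | bit b n h ih =>
    rw [Nat.bits_append_bit n b h]
    simp only [natOfStr, List.foldr_cons] at *
    rw [ih]
    cases b <;> simp [Nat.bit]


lemma primrec_natOfStr : Primrec natOfStr :=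
  Primrec.list_foldr Primrec.id (Primrec.const 0) <| Primrec.to₂ <|
    Primrec.nat_add.comp
      (Primrec.nat_mul.comp (Primrec.const 2) (Primrec.snd.comp Primrec.snd))
      (Primrec.cond (Primrec.fst.comp Primrec.snd) (Primrec.const 1) (Primrec.const 0))

/-- The search function: given `(q, x)` and a candidate `k = ⟨e, s⟩`, check
whether `e` decodes to a string `p` of length `natOfStr q` such that the
machine with code `cU` outputs `encode x` on input `⟨e, encode []⟩` within `s`
steps. -/
def search (cU : Code) (a : Str × Str) (k : ℕ) : Option Str :=
  (Encodable.decode (α := Str) k.unpair.1).bind fun p =>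
    if p.length = natOfStr a.1 ∧
        evaln k.unpair.2 cU (Nat.pair k.unpair.1 (Encodable.encode ([] : Str)))
          = some (Encodable.encode a.2) then some p else none

lemma primrec_search (cU : Code) : Primrec₂ (search cU) := by
  have hdec : Primrec fun x : (Str × Str) × ℕ => (Encodable.decode (α := Str) x.2.unpair.1) :=
    Primrec.decode.comp (Primrec.fst.comp (Primrec.unpair.comp Primrec.snd))
  have hlen : Primrec fun y : ((Str × Str) × ℕ) × Str => y.2.length :=
    Primrec.list_length.comp Primrec.snd
  have hn : Primrec fun y : ((Str × Str) × ℕ) × Str => natOfStr y.1.1.1 :=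
    primrec_natOfStr.comp (Primrec.fst.comp (Primrec.fst.comp Primrec.fst))
  have heval : Primrec fun y : ((Str × Str) × ℕ) × Str =>
      evaln y.1.2.unpair.2 cU (Nat.pair y.1.2.unpair.1 (Encodable.encode ([] : Str))) := by
    have hs : Primrec fun y : ((Str × Str) × ℕ) × Str => y.1.2.unpair.2 :=
      Primrec.snd.comp (Primrec.unpair.comp (Primrec.snd.comp Primrec.fst))
    have hm : Primrec fun y : ((Str × Str) × ℕ) × Str =>
        Nat.pair y.1.2.unpair.1 (Encodable.encode ([] : Str)) :=
      Primrec₂.natPair.comp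
        (Primrec.fst.comp (Primrec.unpair.comp (Primrec.snd.comp Primrec.fst)))
        (Primrec.const _)
    exact primrec_evaln.comp ((hs.pair (Primrec.const cU)).pair hm)
  have hrhs : Primrec fun y : ((Str × Str) × ℕ) × Str =>
      (some (Encodable.encode y.1.1.2) : Option ℕ) :=
    Primrec.option_some.comp
      (Primrec.encode.comp (Primrec.snd.comp (Primrec.fst.comp Primrec.fst)))
  have hcond : PrimrecPred fun y : ((Str × Str) × ℕ) × Str =>
      y.2.length = natOfStr y.1.1.1 ∧
        evaln y.1.2.unpair.2 cU (Nat.pair y.1.2.unpair.1 (Encodable.encode ([] : Str)))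
          = some (Encodable.encode y.1.1.2) :=
    PrimrecPred.and (Primrec.eq.comp hlen hn) (Primrec.eq.comp heval hrhs)
  exact Primrec.option_bind hdec <| Primrec.to₂ <|
    Primrec.ite hcond (Primrec.option_some.comp Primrec.snd) (Primrec.const none)

/-- The machine performing the search. -/
def M (cU : Code) : Str × Str →. Str := fun a => Nat.rfindOpt (search cU a)

lemma partrec_M (cU : Code) : Partrec (M cU) :=
  Partrec.rfindOpt (primrec_search cU).to_comp

end ShortestAux

open ShortestAux Encodable Nat.Partrec Nat.Partrec.Code in
/-- Every string `x` has a shortest description `p` with `C(p|x) = O(log C(x))`. -/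
theorem exists_shortest_description_simple (U : CondMachine) (hU : OptimalMachine U) :
    ∃ c : ℕ, ∀ x : Str, ∃ p : Str,
      x ∈ U.1 (p, []) ∧ p.length = KC U x [] ∧ KC U p x ≤ c * log2 (KC U x []) := by
  -- the identity machine, to show condC U x [] is finite
  have hfstc : Partrec fun a : Str × Str => (Part.some a.1 : Part Str) := Computable.fst
  set Vfst : CondMachine := ⟨fun a => Part.some a.1, hfstc⟩ with hVfst
  obtain ⟨d', hd'⟩ := hU Vfst
  -- the code of U
  obtain ⟨cU, hcU⟩ := Code.exists_code.1 U.2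
  -- the search machine
  set V : CondMachine := ⟨M cU, partrec_M cU⟩ with hV
  obtain ⟨d, hd⟩ := hU V
  refine ⟨d + 2, fun x => ?_⟩
  -- condC U x [] is finite
  have hfin : condC U x [] ≠ ⊤ := by
    intro h
    have h1 : condC Vfst x [] ≤ (x.length : ℕ∞) :=
      sInf_le ⟨x, Part.mem_some x, rfl⟩
    have h2 := (hd' x []).trans (add_le_add_left h1 _)
    rw [h] at h2
    have h3 : ((x.length : ℕ∞) + (d' : ℕ∞)) ≠ ⊤ := by
      rw [← Nat.cast_add]; exact ENat.coe_ne_top _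
    exact h3 (top_le_iff.1 h2)
  set m : ℕ := KC U x [] with hm
  have hmm : (m : ℕ∞) = condC U x [] := ENat.coe_toNat hfin
  -- the infimum is attained: there is a shortest program p₀
  obtain ⟨p₀, hp₀, hlen₀⟩ :
      ∃ p : Str, x ∈ U.1 (p, []) ∧ (p.length : ℕ∞) = (m : ℕ∞) := by
    have hlt : condC U x [] < (m : ℕ∞) + 1 := by
      rw [← hmm, ← Nat.cast_one, ← Nat.cast_add]
      exact_mod_cast Nat.lt_succ_self m
    obtain ⟨a, ha, hlt'⟩ := sInf_lt_iff.1 hlt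
    have hge : (m : ℕ∞) ≤ a := hmm ▸ sInf_le ha
    have : a = (m : ℕ∞) := le_antisymm (by
      rcases ha with ⟨p, _, rfl⟩
      exact_mod_cast Order.le_of_lt_add_one hlt') hge
    rw [this] at ha; exact ha
  have hlen₀' : p₀.length = m := by exact_mod_cast hlen₀
  -- evaln witness for p₀
  have hx_eval : Encodable.encode x ∈ eval cU (Encodable.encode (p₀, ([] : Str))) := by
    rw [hcU]
    simp only [Encodable.encodek, Part.coe_some, Part.bind_some]
    exact Part.mem_map _ hp₀
  obtain ⟨s, hs⟩ := evaln_complete.1 hx_eval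
  have hpairenc : Encodable.encode (p₀, ([] : Str))
      = Nat.pair (Encodable.encode p₀) (Encodable.encode ([] : Str)) := rfl
  -- the search succeeds at k = pair (encode p₀) s
  have hwit : p₀ ∈ search cU (Nat.bits m, x) (Nat.pair (Encodable.encode p₀) s) := by
    have hcnd : p₀.length = m ∧
        evaln s cU (Nat.pair (Encodable.encode p₀) (Encodable.encode ([] : Str)))
          = some (Encodable.encode x) :=
      ⟨hlen₀', hpairenc ▸ Option.mem_def.1 hs⟩
    simp only [search, Nat.unpair_pair, Encodable.encodek, Option.bind_some, natOfStr_bits]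
    rw [if_pos hcnd]
    rfl
  -- so the machine V halts on (bits m, x) with some output p
  have hdom : (M cU (Nat.bits m, x)).Dom :=
    Nat.rfindOpt_dom.2 ⟨_, _, hwit⟩
  set p : Str := (M cU (Nat.bits m, x)).get hdom with hp
  have hpmem : p ∈ M cU (Nat.bits m, x) := Part.get_mem hdom
  obtain ⟨k, hk⟩ := Nat.rfindOpt_spec hpmem
  -- unpack the found witness
  simp only [search, Option.mem_def] at hk
  obtain ⟨p', hp'dec, hp'⟩ := Option.bind_eq_some_iff.1 hk
  by_cases hcond : p'.length = natOfStr (Nat.bits m) ∧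
      evaln k.unpair.2 cU (Nat.pair k.unpair.1 (Encodable.encode ([] : Str)))
        = some (Encodable.encode x)
  swap
  · rw [if_neg hcond] at hp'; exact absurd hp' (by simp)
  rw [if_pos hcond] at hp'
  obtain ⟨hplen, hpeval⟩ := hcond
  obtain rfl : p' = p := Option.some.inj hp'
  rw [natOfStr_bits] at hplen
  -- x ∈ U.1 (p, [])
  have hpx : x ∈ U.1 (p, []) := by
    have h1 : Encodable.encode x ∈ eval cU (Nat.pair k.unpair.1 (Encodable.encode ([] : Str))) :=
      evaln_sound (Option.mem_def.2 hpeval)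
    rw [hcU] at h1
    have hdecpair : (Encodable.decode
        (Nat.pair k.unpair.1 (Encodable.encode ([] : Str))) : Option (Str × Str))
        = some (p, ([] : Str)) := by
      rw [Encodable.decode_prod_val, Nat.unpair_pair]
      simp [hp'dec]
    simp only [hdecpair, Part.coe_some, Part.bind_some] at h1
    obtain ⟨a, ha, hax⟩ := (Part.mem_map_iff _).1 h1
    rwa [Encodable.encode_injective hax] at ha
  refine ⟨p, hpx, hplen, ?_⟩
  -- complexity bound
  have hVle : condC V p x ≤ ((Nat.bits m).length : ℕ∞) :=
    sInf_le ⟨Nat.bits m, hpmem, rfl⟩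
  have hUle : condC U p x ≤ (((Nat.bits m).length + d : ℕ) : ℕ∞) := by
    refine (hd p x).trans ?_
    push_cast
    exact add_le_add_left hVle _
  have hKCle : KC U p x ≤ (Nat.bits m).length + d := ENat.toNat_le_of_le_coe hUle
  have hsize : (Nat.bits m).length ≤ Nat.log 2 m + 1 := by
    rw [Nat.size_eq_bits_len]
    exact Nat.size_le.2 (Nat.lt_pow_succ_log_self (by norm_num) m)
  have hlogmono : Nat.log 2 m ≤ log2 m := Nat.log_mono_right (by omega)
  have hlogpos : 1 ≤ log2 m := Nat.log_pos (by norm_num) (by omega)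
  have : KC U p x ≤ log2 m + 1 + d := by omega
  calc KC U p x ≤ log2 m + 1 + d := this
    _ ≤ (d + 2) * log2 m := by nlinarith [hlogpos]
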